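/- Test-time training descent theorem: Let L_m(x,y;θ) be differentiable, convex, and β-smooth in θ, with ‖∇_θ L_m(x,y;θ)‖ ≤ G and ‖∇_θ L_s(x;θ)‖ ≤ G for all θ, where L_s(x;θ) is a differentiable self-supervised loss. Fix learning rate η = ε/(βG²). Then for every (x,y) with ⟨∇_θ L_m(x,y;θ), ∇_θ L_s(x;θ)⟩ > ε > 0, the updated parameters θ(x) = θ - η∇_θ L_s(x;θ) satisfy L_m(x,y;θ(x)) < L_m(x,y;θ). -/

import Mathlib

open InnerProductSpace

private lemma descent_lemma {E : Type*} [NormedAddCommGroup E] [InnerProductSpace ℝ E] [CompleteSpace E]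
    (f : E → ℝ) (β : ℝ) (hβ : 0 < β)
    (hdiff : ∀ θ, DifferentiableAt ℝ f θ)
    (hsmooth : ∀ θ₁ θ₂, ‖gradient f θ₁ - gradient f θ₂‖ ≤ β * ‖θ₁ - θ₂‖)
    (θ v : E) :
    f (θ + v) ≤ f θ + inner ℝ (gradient f θ) v + β / 2 * ‖v‖ ^ 2 := by
  set ψ : ℝ → ℝ := fun t => inner ℝ (gradient f (θ + t • v)) v with hψ
  have hlip : LipschitzWith β.toNNReal (gradient f) := by
    apply LipschitzWith.of_dist_le_mul
    intro a b
    simpa [dist_eq_norm, Real.coe_toNNReal _ hβ.le] using hsmooth a b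
  have hcont : Continuous ψ := by
    apply Continuous.inner
    · exact hlip.continuous.comp (by continuity)
    · exact continuous_const
  have hderiv : ∀ t : ℝ, HasDerivAt (fun t : ℝ => f (θ + t • v)) (ψ t) t := by
    intro t
    have h1 : HasFDerivAt f (toDual ℝ E (gradient f (θ + t • v))) (θ + t • v) :=
      (hdiff _).hasGradientAt.hasFDerivAt
    have h2 : HasDerivAt (fun t : ℝ => θ + t • v) v t := by
      simpa using ((hasDerivAt_id t).smul_const v).const_add θ
    have := h1.comp_hasDerivAt t h2
    simpa [hψ, toDual_apply_apply, Function.comp_def] using this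
  have hint : ∀ a b : ℝ, IntervalIntegrable ψ MeasureTheory.volume a b :=
    fun a b => hcont.intervalIntegrable a b
  have heq : f (θ + v) - f θ = ∫ t in (0:ℝ)..1, ψ t := by
    have := intervalIntegral.integral_eq_sub_of_hasDerivAt
      (fun t _ => hderiv t) (hint 0 1)
    simp at this
    rw [this]
  have hbound : (∫ t in (0:ℝ)..1, ψ t) ≤ ∫ t in (0:ℝ)..1, (ψ 0 + β * t * ‖v‖ ^ 2) := by
    apply intervalIntegral.integral_mono_on (by norm_num) (hint 0 1)
    · exact (continuous_const.add ((continuous_const.mul continuous_id).mul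
        continuous_const)).intervalIntegrable 0 1
    · intro t ht
      have ht0 : 0 ≤ t := ht.1
      have : ψ t - ψ 0 ≤ β * t * ‖v‖ ^ 2 := by
        have h1 : ψ t - ψ 0 = inner ℝ (gradient f (θ + t • v) - gradient f (θ + (0:ℝ) • v)) v := by
          simp [hψ, inner_sub_left]
        rw [h1]
        calc inner ℝ (gradient f (θ + t • v) - gradient f (θ + (0:ℝ) • v)) v
            ≤ ‖gradient f (θ + t • v) - gradient f (θ + (0:ℝ) • v)‖ * ‖v‖ :=
              real_inner_le_norm _ _
          _ ≤ β * ‖(θ + t • v) - (θ + (0:ℝ) • v)‖ * ‖v‖ := by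
              apply mul_le_mul_of_nonneg_right (hsmooth _ _) (norm_nonneg v)
          _ = β * t * ‖v‖ ^ 2 := by
              have : (θ + t • v) - (θ + (0:ℝ) • v) = t • v := by
                simp
              rw [this, norm_smul]
              simp [Real.norm_eq_abs, abs_of_nonneg ht0]
              ring
      linarith
  have hval : (∫ t in (0:ℝ)..1, (ψ 0 + β * t * ‖v‖ ^ 2)) = ψ 0 + β / 2 * ‖v‖ ^ 2 := by
    rw [intervalIntegral.integral_add (intervalIntegrable_const) (by
      exact ((continuous_const.mul continuous_id).mul continuous_const).intervalIntegrable 0 1)]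
    rw [intervalIntegral.integral_const]
    have : (∫ t in (0:ℝ)..1, β * t * ‖v‖ ^ 2) = β * ‖v‖ ^ 2 * ∫ t in (0:ℝ)..1, t := by
      rw [← intervalIntegral.integral_const_mul]
      congr 1; ext t; ring
    rw [this, integral_id]
    norm_num
    ring
  have hψ0 : ψ 0 = inner ℝ (gradient f θ) v := by simp [hψ]
  linarith [heq, hbound.trans_eq hval, hψ0.symm.le]

theorem test_time_training_descent (d : ℕ) {X Y : Type*}
    (Lm : X → Y → EuclideanSpace ℝ (Fin d) → ℝ)
    (Ls : X → EuclideanSpace ℝ (Fin d) → ℝ)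
    (β G ε : ℝ) (hβ : 0 < β) (hG : 0 < G) (hε : 0 < ε)
    (hmdiff : ∀ x y θ, DifferentiableAt ℝ (Lm x y) θ)
    (hsdiff : ∀ x θ, DifferentiableAt ℝ (Ls x) θ)
    (hconv : ∀ x y, ConvexOn ℝ Set.univ (Lm x y))
    (hsmooth : ∀ x y θ₁ θ₂,
      ‖gradient (Lm x y) θ₁ - gradient (Lm x y) θ₂‖ ≤ β * ‖θ₁ - θ₂‖)
    (hGm : ∀ x y θ, ‖gradient (Lm x y) θ‖ ≤ G)
    (hGs : ∀ x θ, ‖gradient (Ls x) θ‖ ≤ G) :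
    ∀ (x : X) (y : Y) (θ : EuclideanSpace ℝ (Fin d)),
      (inner ℝ (gradient (Lm x y) θ) (gradient (Ls x) θ) : ℝ) > ε →
      Lm x y (θ - (ε / (β * G^2)) • gradient (Ls x) θ) < Lm x y θ := by
  intro x y θ hip
  set η : ℝ := ε / (β * G ^ 2) with hη
  have hηpos : 0 < η := div_pos hε (by positivity)
  set g := gradient (Ls x) θ with hg
  have hkey := descent_lemma (Lm x y) β hβ (hmdiff x y) (hsmooth x y) θ (-(η • g))
  have h1 : θ + -(η • g) = θ - η • g := by abel
  rw [h1] at hkey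
  have h2 : (inner ℝ (gradient (Lm x y) θ) (-(η • g)) : ℝ) = -(η * inner ℝ (gradient (Lm x y) θ) g) := by
    rw [inner_neg_right, real_inner_smul_right]
  have h3 : ‖-(η • g)‖ ^ 2 = η ^ 2 * ‖g‖ ^ 2 := by
    rw [norm_neg, norm_smul]
    simp [Real.norm_eq_abs, abs_of_pos hηpos]
    ring
  rw [h2, h3] at hkey
  have hgG : ‖g‖ ≤ G := hGs x θ
  have hg2 : ‖g‖ ^ 2 ≤ G ^ 2 := by nlinarith [norm_nonneg g]
  have hterm : β / 2 * (η ^ 2 * ‖g‖ ^ 2) ≤ η * ε / 2 := by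
    have : β / 2 * (η ^ 2 * ‖g‖ ^ 2) ≤ β / 2 * (η ^ 2 * G ^ 2) :=
      mul_le_mul_of_nonneg_left (mul_le_mul_of_nonneg_left hg2 (sq_nonneg η)) (by positivity)
    calc β / 2 * (η ^ 2 * ‖g‖ ^ 2) ≤ β / 2 * (η ^ 2 * G ^ 2) := this
      _ = η * ε / 2 := by
          rw [hη]; field_simp
  have hipε : η * ε < η * inner ℝ (gradient (Lm x y) θ) g :=
    mul_lt_mul_of_pos_left hip hηpos
  have : 0 < η * ε := mul_pos hηpos hε
  linarith
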